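/- Let V be a vector space over ℂ, T : V →ₗ[ℂ] V an arbitrary ℂ-linear endomorphism, b > 0 a real number, λ a real number, and k an integer. (i) If |λ| > b and z := (Real.artanh (b/λ) + k·π·I)/b, then LinearMap.ker( Complex.cosh(z·b) • (1 : V →ₗ[ℂ] V) − (Complex.sinh(z·b)/b) • T ) = LinearMap.ker( T − (λ : ℂ) • (1 : V →ₗ[ℂ] V) ). (ii) If |λ| < b and z := (Real.artanh (λ/b) + (k + 1/2)·π·I)/b, then the same identity holds: LinearMap.ker( Complex.cosh(z·b) • 1 − (Complex.sinh(z·b)/b) • T ) = LinearMap.ker( T − (λ : ℂ) • 1 ). -/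

import Mathlib

/-- The inverse hyperbolic tangent on `(-1, 1)` (not present in Mathlib),
`artanh x = (1/2) · log((1+x)/(1-x))`. -/
noncomputable def Real.artanh' (x : ℝ) : ℝ := (1 / 2) * Real.log ((1 + x) / (1 - x))

lemma Real.tanh_artanh' {x : ℝ} (h : |x| < 1) : Real.tanh (Real.artanh' x) = x := by
  obtain ⟨h1, h2⟩ := abs_lt.mp h
  have hx1 : (0:ℝ) < 1 + x := by linarith
  have hx2 : (0:ℝ) < 1 - x := by linarith
  set a := Real.artanh' x with ha
  have hepos : 0 < Real.exp a := Real.exp_pos a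
  have he : Real.exp a ^ 2 = (1 + x) / (1 - x) := by
    rw [sq, ← Real.exp_add, ha, Real.artanh']
    rw [show (1:ℝ)/2 * Real.log ((1+x)/(1-x)) + 1/2 * Real.log ((1+x)/(1-x))
        = Real.log ((1+x)/(1-x)) by ring]
    exact Real.exp_log (div_pos hx1 hx2)
  have he' : Real.exp a ^ 2 * (1 - x) = 1 + x := by
    rw [he]; field_simp
  rw [Real.tanh_eq_sinh_div_cosh, Real.sinh_eq, Real.cosh_eq, Real.exp_neg]
  have hne : Real.exp a ≠ 0 := ne_of_gt hepos
  rw [div_eq_iff (by positivity)]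
  field_simp
  nlinarith [he']

lemma Real.sinh_artanh_div_cosh_artanh {x : ℝ} (h : |x| < 1) :
    Real.sinh (Real.artanh' x) / Real.cosh (Real.artanh' x) = x := by
  rw [← Real.tanh_eq_sinh_div_cosh]; exact Real.tanh_artanh' h

lemma Real.cos_int_mul_pi' (k : ℤ) : Real.cos ((k:ℝ) * Real.pi) = (-1)^k := by
  simpa using Real.cos_int_mul_pi_sub 0 k

lemma ker_aux {V : Type*} [AddCommGroup V] [Module ℂ V] (T : V →ₗ[ℂ] V) (b l c s : ℂ)
    (hb : b ≠ 0) (hs : s ≠ 0) (h : b * c = l * s) :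
    LinearMap.ker (c • (1 : V →ₗ[ℂ] V) - (s / b) • T)
      = LinearMap.ker (T - l • (1 : V →ₗ[ℂ] V)) := by
  have hc : c = l * s / b := by field_simp; linear_combination h
  have key : c • (1 : V →ₗ[ℂ] V) - (s / b) • T = (-(s/b)) • (T - l • (1 : V →ₗ[ℂ] V)) := by
    rw [hc, smul_sub, smul_smul]
    rw [show (-(s/b)) * l = -(l * s / b) by ring]
    module
  rw [key, LinearMap.ker_smul _ _ (neg_ne_zero.mpr (div_ne_zero hs hb))]

theorem ker_complex_cosh_smul_sub_sinh_smul_eq_ker_sub_smul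
    {V : Type*} [AddCommGroup V] [Module ℂ V]
    (T : V →ₗ[ℂ] V) (b : ℝ) (hb : 0 < b) (l : ℝ) (k : ℤ) :
    (b < |l| → ∀ z : ℂ,
      z = ((Real.artanh' (b / l) : ℂ) + (k : ℂ) * (Real.pi : ℂ) * Complex.I) / (b : ℂ) →
      LinearMap.ker (Complex.cosh (z * (b : ℂ)) • (1 : V →ₗ[ℂ] V)
          - (Complex.sinh (z * (b : ℂ)) / (b : ℂ)) • T) =
        LinearMap.ker (T - (l : ℂ) • (1 : V →ₗ[ℂ] V))) ∧
    (|l| < b → ∀ z : ℂ,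
      z = ((Real.artanh' (l / b) : ℂ) + ((k : ℂ) + 1 / 2) * (Real.pi : ℂ) * Complex.I) / (b : ℂ) →
      LinearMap.ker (Complex.cosh (z * (b : ℂ)) • (1 : V →ₗ[ℂ] V)
          - (Complex.sinh (z * (b : ℂ)) / (b : ℂ)) • T) =
        LinearMap.ker (T - (l : ℂ) • (1 : V →ₗ[ℂ] V))) := by
  have hbR : (b:ℝ) ≠ 0 := ne_of_gt hb
  have hbC : (b:ℂ) ≠ 0 := by exact_mod_cast hbR
  constructor
  · intro hl z hz
    have hl0 : l ≠ 0 := fun h => by simp [h] at hl; linarith [abs_nonneg l, hl]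
    have habs : |b / l| < 1 := by
      rw [abs_div, abs_of_pos hb, div_lt_one (lt_trans hb hl)]; exact hl
    set a := Real.artanh' (b / l) with ha
    have htanh : Real.sinh a / Real.cosh a = b / l := Real.sinh_artanh_div_cosh_artanh habs
    have hcoshpos : 0 < Real.cosh a := Real.cosh_pos a
    have hreal : b * Real.cosh a = l * Real.sinh a := by
      field_simp at htanh; linarith [htanh]
    have hsinh0 : Real.sinh a ≠ 0 := by
      intro h0
      rw [h0, mul_zero] at hreal
      nlinarith
    have hw : z * (b:ℂ) = (a:ℂ) + (k:ℂ) * (Real.pi:ℂ) * Complex.I := by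
      rw [hz, div_mul_cancel₀ _ hbC]
    have hcos : Complex.cos ((k:ℂ) * (Real.pi:ℂ)) = (-1)^k := by
      have : ((k:ℂ) * (Real.pi:ℂ)) = (((k:ℝ) * Real.pi : ℝ) : ℂ) := by push_cast; ring
      rw [this, ← Complex.ofReal_cos, Real.cos_int_mul_pi']
      push_cast; ring
    have hsin : Complex.sin ((k:ℂ) * (Real.pi:ℂ)) = 0 := Complex.sin_int_mul_pi k
    have hcosh : Complex.cosh (z * (b:ℂ)) = (-1)^k * (Real.cosh a : ℂ) := by
      rw [hw, Complex.cosh_add, Complex.cosh_mul_I, Complex.sinh_mul_I, hcos, hsin,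
        ← Complex.ofReal_cosh]
      ring
    have hsinhC : Complex.sinh (z * (b:ℂ)) = (-1)^k * (Real.sinh a : ℂ) := by
      rw [hw, Complex.sinh_add, Complex.cosh_mul_I, Complex.sinh_mul_I, hcos, hsin,
        ← Complex.ofReal_sinh]
      ring
    have hs' : Complex.sinh (z * (b:ℂ)) ≠ 0 := by
      rw [hsinhC]
      have h1 : ((Real.sinh a : ℝ) : ℂ) ≠ 0 := by exact_mod_cast hsinh0
      have hm1 : ((-1:ℂ))^k ≠ 0 := zpow_ne_zero _ (by norm_num)
      exact mul_ne_zero hm1 h1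
    have hmain : (b:ℂ) * Complex.cosh (z * (b:ℂ)) = (l:ℂ) * Complex.sinh (z * (b:ℂ)) := by
      rw [hcosh, hsinhC]
      have hcast : (b:ℂ) * (Real.cosh a : ℂ) = (l:ℂ) * (Real.sinh a : ℂ) := by
        exact_mod_cast hreal
      linear_combination ((-1:ℂ))^k * hcast
    exact ker_aux T (b:ℂ) (l:ℂ) _ _ hbC hs' hmain
  · intro hl z hz
    have habs : |l / b| < 1 := by
      rw [abs_div, abs_of_pos hb, div_lt_one hb]; exact hl
    set a := Real.artanh' (l / b) with ha
    have htanh : Real.sinh a / Real.cosh a = l / b := Real.sinh_artanh_div_cosh_artanh habs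
    have hcoshpos : 0 < Real.cosh a := Real.cosh_pos a
    have hreal : b * Real.sinh a = l * Real.cosh a := by
      field_simp at htanh; linarith [htanh]
    have hw : z * (b:ℂ) = (a:ℂ) + ((k:ℂ) + 1/2) * (Real.pi:ℂ) * Complex.I := by
      rw [hz, div_mul_cancel₀ _ hbC]
    have hcos : Complex.cos (((k:ℂ) + 1/2) * (Real.pi:ℂ)) = 0 := by
      have h1 : (((k:ℂ) + 1/2) * (Real.pi:ℂ)) = ((((k:ℝ) + 1/2) * Real.pi : ℝ) : ℂ) := by
        push_cast; ring
      have h2 : ((k:ℝ) + 1/2) * Real.pi = (k:ℝ) * Real.pi + Real.pi / 2 := by ring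
      rw [h1, ← Complex.ofReal_cos, h2, Real.cos_add_pi_div_two, Real.sin_int_mul_pi]
      simp
    have hsin : Complex.sin (((k:ℂ) + 1/2) * (Real.pi:ℂ)) = (-1)^k := by
      have h1 : (((k:ℂ) + 1/2) * (Real.pi:ℂ)) = ((((k:ℝ) + 1/2) * Real.pi : ℝ) : ℂ) := by
        push_cast; ring
      have h2 : ((k:ℝ) + 1/2) * Real.pi = (k:ℝ) * Real.pi + Real.pi / 2 := by ring
      rw [h1, ← Complex.ofReal_sin, h2, Real.sin_add_pi_div_two, Real.cos_int_mul_pi']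
      push_cast; ring
    have hcosh : Complex.cosh (z * (b:ℂ)) = (-1)^k * Complex.I * (Real.sinh a : ℂ) := by
      rw [hw, Complex.cosh_add, Complex.cosh_mul_I, Complex.sinh_mul_I, hcos, hsin,
        ← Complex.ofReal_sinh]
      ring
    have hsinhC : Complex.sinh (z * (b:ℂ)) = (-1)^k * Complex.I * (Real.cosh a : ℂ) := by
      rw [hw, Complex.sinh_add, Complex.cosh_mul_I, Complex.sinh_mul_I, hcos, hsin,
        ← Complex.ofReal_cosh]
      ring
    have hs' : Complex.sinh (z * (b:ℂ)) ≠ 0 := by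
      rw [hsinhC]
      have h1 : ((Real.cosh a : ℝ) : ℂ) ≠ 0 := by exact_mod_cast ne_of_gt hcoshpos
      have hm1 : ((-1:ℂ))^k ≠ 0 := zpow_ne_zero _ (by norm_num)
      exact mul_ne_zero (mul_ne_zero hm1 Complex.I_ne_zero) h1
    have hmain : (b:ℂ) * Complex.cosh (z * (b:ℂ)) = (l:ℂ) * Complex.sinh (z * (b:ℂ)) := by
      rw [hcosh, hsinhC]
      have hcast : (b:ℂ) * (Real.sinh a : ℂ) = (l:ℂ) * (Real.cosh a : ℂ) := by
        exact_mod_cast hreal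
      linear_combination ((-1:ℂ))^k * Complex.I * hcast
    exact ker_aux T (b:ℂ) (l:ℂ) _ _ hbC hs' hmain
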